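/- Let G be a bridgeless graph with d(G)=4 and let uv be an edge with l_G(uv) = g*(G) = 9. Then for every x ∈ S_{3,2} and every y ∈ S_{2,3}, d(x,y) = 4, and every shortest path x w_1 w_2 w_3 y from x to y satisfies w_1 ∈ S_{4,3}, w_2 ∈ S_{4,4} and w_3 ∈ S_{3,4}. -/

import Mathlib

/-- A multigraph: vertices `V`, edges `E`, each edge has two distinct endpoints. -/
structure Multigraph (V : Type*) (E : Type*) where
  ends : E → Sym2 V
  loopless : ∀ e, ¬ (ends e).IsDiag

namespace Multigraph

variable {V E : Type*}

/-- Adjacency in a multigraph: some edge joins `x` and `y`. -/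
def Adjm (G : Multigraph V E) (x y : V) : Prop := ∃ e, G.ends e = s(x, y)

/-- The underlying simple graph of a multigraph. -/
def toSimple (G : Multigraph V E) : SimpleGraph V where
  Adj x y := x ≠ y ∧ G.Adjm x y
  symm := by
    constructor
    rintro x y ⟨hne, e, he⟩
    exact ⟨hne.symm, e, he.trans (Sym2.eq_swap)⟩
  loopless := by constructor; rintro x ⟨hne, -⟩; exact hne rfl

/-- Distance between two vertices (length of a shortest path). -/
noncomputable def dist (G : Multigraph V E) (x y : V) : ℕ := G.toSimple.dist x y

/-- The diameter of a multigraph. -/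
noncomputable def diam (G : Multigraph V E) : ℕ := sSup {n | ∃ x y, G.dist x y = n}

/-- The multigraph obtained by deleting the edge `e₀`. -/
def deleteEdge (G : Multigraph V E) (e₀ : E) : Multigraph V {e : E // e ≠ e₀} where
  ends e := G.ends e.1
  loopless e := G.loopless e.1

/-- A (connected) multigraph is bridgeless if deleting any single edge leaves it connected. -/
def Bridgeless (G : Multigraph V E) : Prop :=
  ∀ e : E, ((G.deleteEdge e).toSimple).Connected

/-- Walks in a multigraph, recording the edges used. -/
inductive Walk (G : Multigraph V E) : V → V → Type _
  | nil {v : V} : Walk G v v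
  | cons {x y z : V} (e : E) (he : G.ends e = s(x, y)) (p : Walk G y z) : Walk G x z

namespace Walk

variable {G : Multigraph V E}

/-- The length (number of edges) of a walk. -/
def length : ∀ {x y : V}, G.Walk x y → ℕ
  | _, _, .nil => 0
  | _, _, .cons _ _ p => p.length + 1

/-- The list of edges of a walk. -/
def edges : ∀ {x y : V}, G.Walk x y → List E
  | _, _, .nil => []
  | _, _, .cons e _ p => e :: p.edges

/-- The list of vertices of a walk. -/
def support : ∀ {x y : V}, G.Walk x y → List V
  | x, _, .nil => [x]
  | x, _, .cons _ _ p => x :: p.support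

/-- A closed walk is a cycle if its edges are distinct and its vertices
(other than the repeated base point) are distinct. -/
def IsCycle {v : V} (p : G.Walk v v) : Prop :=
  p.edges.Nodup ∧ p.support.tail.Nodup ∧ 0 < p.length

end Walk

/-- The edge girth of `e`: the length of a shortest cycle containing `e`. -/
noncomputable def edgeGirth (G : Multigraph V E) (e : E) : ℕ :=
  sInf {n | ∃ (v : V) (p : G.Walk v v), p.IsCycle ∧ e ∈ p.edges ∧ p.length = n}

/-- The maximum edge girth `g*(G)`. -/
noncomputable def maxEdgeGirth (G : Multigraph V E) : ℕ :=
  sSup (Set.range fun e => G.edgeGirth e)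

/-- An orientation of a multigraph: each edge is assigned a direction. -/
structure Orientation (G : Multigraph V E) where
  dir : E → V × V
  compat : ∀ e, s((dir e).1, (dir e).2) = G.ends e

/-- Arcs of an orientation. -/
def Orientation.DAdj {G : Multigraph V E} (o : G.Orientation) (x y : V) : Prop :=
  ∃ e, o.dir e = (x, y)

/-- Directed distance in an orientation (`⊤` if unreachable). -/
noncomputable def Orientation.ddist {G : Multigraph V E} (o : G.Orientation) (x y : V) : ℕ∞ :=
  sInf {n : ℕ∞ | ∃ l : List V, List.Chain o.DAdj x l ∧
    (x :: l).getLast (List.cons_ne_nil x l) = y ∧ (l.length : ℕ∞) = n}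

/-- An orientation is strong if every vertex is reachable from every vertex by a directed path. -/
def Orientation.IsStrong {G : Multigraph V E} (o : G.Orientation) : Prop :=
  ∀ x y : V, o.ddist x y ≠ ⊤

/-- The diameter of an orientation. -/
noncomputable def Orientation.odiam {G : Multigraph V E} (o : G.Orientation) : ℕ∞ :=
  ⨆ (x : V) (y : V), o.ddist x y

end Multigraph

namespace Multigraph

variable {V E : Type*}

/-- `S G u v i j` is the set of vertices at distance `i` from `u` and `j` from `v`. -/
noncomputable def S (G : Multigraph V E) (u v : V) (i j : ℕ) : Set V :=
  {w | G.dist w u = i ∧ G.dist w v = j}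

/-- The neighbourhood of a vertex. -/
def nbhd (G : Multigraph V E) (w : V) : Set V := {x | G.Adjm w x}

end Multigraph


section Aux

namespace Multigraph

variable {V E : Type*}

/-- Convert a walk in the deleted simple graph to a multigraph walk with controlled edges. -/
lemma exists_mwalk {G : Multigraph V E} (e0 : E) :
    ∀ {a b : V} (p : ((G.deleteEdge e0).toSimple).Walk a b),
    ∃ q : G.Walk a b, q.length = p.length ∧ q.support = p.support ∧
      (∀ f ∈ q.edges, f ≠ e0 ∧ ∀ z, z ∈ G.ends f → z ∈ p.support) ∧
      (p.support.Nodup → q.edges.Nodup) := by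
  intro a b p
  induction p with
  | nil =>
    refine ⟨.nil, rfl, rfl, ?_, ?_⟩
    · intro f hf; simp [Walk.edges] at hf
    · intro _; simp [Walk.edges]
  | @cons a c b hadj p' ih =>
    obtain ⟨hne, e', he'⟩ := id hadj
    obtain ⟨q', hl, hs, hef, hnd⟩ := ih
    have he'' : G.ends e'.1 = s(a, c) := he'
    refine ⟨.cons e'.1 he'' q', ?_, ?_, ?_, ?_⟩
    · show q'.length + 1 = p'.length + 1
      omega
    · show a :: q'.support = a :: p'.support
      rw [hs]
    · intro f hf
      rcases List.mem_cons.mp hf with rfl | hf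
      · refine ⟨e'.2, ?_⟩
        intro z hz
        rw [he''] at hz
        rcases Sym2.mem_iff.mp hz with rfl | rfl
        · simp [SimpleGraph.Walk.support_cons]
        · simp [SimpleGraph.Walk.support_cons, SimpleGraph.Walk.start_mem_support]
      · refine ⟨(hef f hf).1, fun z hz => ?_⟩
        simp [SimpleGraph.Walk.support_cons]
        exact Or.inr ((hef f hf).2 z hz)
    · intro hnodup
      rw [SimpleGraph.Walk.support_cons, List.nodup_cons] at hnodup
      show (e'.1 :: q'.edges).Nodup
      refine List.nodup_cons.mpr ⟨?_, hnd hnodup.2⟩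
      intro hmem
      have := (hef e'.1 hmem).2 a (by rw [he'']; exact Sym2.mem_mk_left a c)
      exact hnodup.1 this

/-- A walk in `G.toSimple` avoiding one endpoint of `e0` yields a walk in the deleted graph. -/
lemma exists_del_walk {G : Multigraph V E} {e0 : E} {u0 v0 : V}
    (hend : G.ends e0 = s(u0, v0)) {m : V} (hm : m = u0 ∨ m = v0) :
    ∀ {a b : V} (p : G.toSimple.Walk a b), m ∉ p.support →
      ∃ q : ((G.deleteEdge e0).toSimple).Walk a b, q.length = p.length := by
  intro a b p
  induction p with
  | nil => intro _; exact ⟨.nil, rfl⟩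
  | @cons a c b hadj p' ih =>
    intro hmem
    rw [SimpleGraph.Walk.support_cons, List.mem_cons] at hmem
    push_neg at hmem
    obtain ⟨hma, hmp⟩ := hmem
    obtain ⟨q', hq'⟩ := ih hmp
    obtain ⟨hne, f, hf⟩ := id hadj
    have hfe : f ≠ e0 := by
      rintro rfl
      rw [hend] at hf
      have hmac : m = a ∨ m = c := by
        rcases Sym2.eq_iff.mp hf with ⟨h1, h2⟩ | ⟨h1, h2⟩ <;>
          rcases hm with rfl | rfl <;> tauto
      rcases hmac with rfl | rfl
      · exact hma rfl
      · exact hmp p'.start_mem_support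
    have hadj' : ((G.deleteEdge e0).toSimple).Adj a c := ⟨hne, ⟨f, hfe⟩, hf⟩
    exact ⟨.cons hadj' q', by simp [hq']⟩

lemma del_dist_le {G : Multigraph V E} {e0 : E} {u0 v0 : V}
    (hend : G.ends e0 = s(u0, v0)) {m : V} (hm : m = u0 ∨ m = v0)
    {a b : V} (p : G.toSimple.Walk a b) (hmem : m ∉ p.support) :
    ((G.deleteEdge e0).toSimple).dist a b ≤ p.length := by
  obtain ⟨q, hq⟩ := exists_del_walk hend hm p hmem
  exact hq ▸ SimpleGraph.dist_le q

/-- A walk in the deleted graph is a walk in `G.toSimple`. -/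
lemma exists_gwalk {G : Multigraph V E} {e0 : E} :
    ∀ {a b : V} (p : ((G.deleteEdge e0).toSimple).Walk a b),
      ∃ q : G.toSimple.Walk a b, q.length = p.length := by
  intro a b p
  induction p with
  | nil => exact ⟨.nil, rfl⟩
  | @cons a c b hadj p' ih =>
    obtain ⟨q', hq'⟩ := ih
    obtain ⟨hne, f, hf⟩ := id hadj
    exact ⟨.cons ⟨hne, f.1, hf⟩ q', congrArg (· + 1) hq'⟩

lemma dist_le_del {G : Multigraph V E} {e0 : E}
    (hc : ((G.deleteEdge e0).toSimple).Connected) (a b : V) :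
    G.toSimple.dist a b ≤ ((G.deleteEdge e0).toSimple).dist a b := by
  obtain ⟨p, _, hlen⟩ := hc.exists_path_of_dist a b
  obtain ⟨q, hq⟩ := exists_gwalk p
  rw [← hlen, ← hq]
  exact SimpleGraph.dist_le q

lemma dist_add_dist_le_length {W : Type*} {G' : SimpleGraph W} {a b m : W}
    (p : G'.Walk a b) (hm : m ∈ p.support) :
    G'.dist a m + G'.dist m b ≤ p.length := by
  classical
  have hspec := p.take_spec hm
  have hlen : (p.takeUntil m hm).length + (p.dropUntil m hm).length = p.length := by
    rw [← SimpleGraph.Walk.length_append, hspec]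
  calc G'.dist a m + G'.dist m b
      ≤ (p.takeUntil m hm).length + (p.dropUntil m hm).length :=
        Nat.add_le_add (SimpleGraph.dist_le _) (SimpleGraph.dist_le _)
    _ = p.length := hlen

/-- Transfer lemma: `G`-distance to `u0` vs distances in `G - e0`. -/
lemma transfer {G : Multigraph V E} (hc : G.toSimple.Connected) {e0 : E} {u0 v0 : V}
    (hend : G.ends e0 = s(u0, v0)) (hne : u0 ≠ v0) (w : V) :
    min (((G.deleteEdge e0).toSimple).dist w u0)
        (((G.deleteEdge e0).toSimple).dist w v0 + 1) ≤ G.toSimple.dist w u0 := by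
  classical
  obtain ⟨p, hp, hlen⟩ := hc.exists_path_of_dist w u0
  by_cases hv : v0 ∈ p.support
  · have hspec := p.take_spec hv
    have hnd : p.support.Nodup := hp.support_nodup
    have hsupp : p.support = (p.takeUntil v0 hv).support ++ (p.dropUntil v0 hv).support.tail := by
      rw [← SimpleGraph.Walk.support_append, hspec]
    have hu_tail : u0 ∈ (p.dropUntil v0 hv).support.tail := by
      have h1 : u0 ∈ (p.dropUntil v0 hv).support := SimpleGraph.Walk.end_mem_support _
      rw [SimpleGraph.Walk.support_eq_cons] at h1
      rcases List.mem_cons.mp h1 with h | h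
      · exact absurd h hne
      · exact h
    have hu_take : u0 ∉ (p.takeUntil v0 hv).support := by
      rw [hsupp] at hnd
      intro hmem
      exact (List.disjoint_of_nodup_append hnd) hmem hu_tail
    have h1 : ((G.deleteEdge e0).toSimple).dist w v0 ≤ (p.takeUntil v0 hv).length :=
      del_dist_le hend (Or.inl rfl) _ hu_take
    have h2 : 1 ≤ (p.dropUntil v0 hv).length := by
      by_contra h
      push_neg at h
      interval_cases h' : (p.dropUntil v0 hv).length
      · exact hne (SimpleGraph.Walk.eq_of_length_eq_zero h').symm
    have hlen2 : (p.takeUntil v0 hv).length + (p.dropUntil v0 hv).length = p.length := by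
      rw [← SimpleGraph.Walk.length_append, hspec]
    have : ((G.deleteEdge e0).toSimple).dist w v0 + 1 ≤ G.toSimple.dist w u0 := by
      rw [← hlen]; omega
    exact le_trans (min_le_right _ _) this
  · have h1 : ((G.deleteEdge e0).toSimple).dist w u0 ≤ p.length :=
      del_dist_le hend (Or.inr rfl) _ hv
    rw [hlen] at h1
    exact le_trans (min_le_left _ _) h1

end Multigraph

end Aux

/-- Let `G` be a bridgeless graph with `d(G) = 4` and let `uv` be an edge
with `l_G(uv) = g*(G) = 9`. Then for every `x ∈ S₃₂` and every `y ∈ S₂₃` we have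
`d(x, y) = 4`, and every shortest path `x w₁ w₂ w₃ y` from `x` to `y` satisfies
`w₁ ∈ S₄₃`, `w₂ ∈ S₄₄` and `w₃ ∈ S₃₄`. -/
theorem stmt17 {V E : Type*} [Fintype V] [Fintype E] (G : Multigraph V E)
    (hconn : G.toSimple.Connected) (hbridgeless : G.Bridgeless) (hdiam : G.diam = 4)
    (u v : V) (e : E) (he : G.ends e = s(u, v))
    (hmax : G.edgeGirth e = G.maxEdgeGirth) (h9 : G.maxEdgeGirth = 9) :
    ∀ x ∈ G.S u v 3 2, ∀ y ∈ G.S u v 2 3,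
      G.dist x y = 4 ∧
      ∀ w1 w2 w3 : V, G.Adjm x w1 → G.Adjm w1 w2 → G.Adjm w2 w3 → G.Adjm w3 y →
        w1 ∈ G.S u v 4 3 ∧ w2 ∈ G.S u v 4 4 ∧ w3 ∈ G.S u v 3 4 := by
  classical
  intro x hx y hy
  obtain ⟨hxu, hxv⟩ := hx
  obtain ⟨hyu, hyv⟩ := hy
  replace hxu : G.toSimple.dist x u = 3 := hxu
  replace hxv : G.toSimple.dist x v = 2 := hxv
  replace hyu : G.toSimple.dist y u = 2 := hyu
  replace hyv : G.toSimple.dist y v = 3 := hyv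
  set H := (G.deleteEdge e).toSimple with hHdef
  have HC : H.Connected := hbridgeless e
  have unv : u ≠ v := by
    intro h
    exact G.loopless e (by rw [he, h]; exact Sym2.mk_isDiag_iff.mpr rfl)
  have hfin : {n | ∃ a b : V, G.dist a b = n}.Finite := by
    have hsub : {n | ∃ a b : V, G.dist a b = n} ⊆
        Set.range (fun pr : V × V => G.dist pr.1 pr.2) := by
      rintro n ⟨a, b, rfl⟩; exact ⟨(a, b), rfl⟩
    exact (Set.finite_range _).subset hsub
  have hd4 : ∀ a b : V, G.toSimple.dist a b ≤ 4 := by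
    intro a b
    have hle : G.dist a b ≤ G.diam := le_csSup hfin.bddAbove ⟨a, b, rfl⟩
    rw [hdiam] at hle; exact hle
  have tri : ∀ a b c : V, G.toSimple.dist a c ≤ G.toSimple.dist a b + G.toSimple.dist b c :=
    fun _ _ _ => hconn.dist_triangle
  have Htri : ∀ a b c : V, H.dist a c ≤ H.dist a b + H.dist b c :=
    fun _ _ _ => HC.dist_triangle
  have Hcomm : ∀ a b : V, H.dist a b = H.dist b a := fun _ _ => SimpleGraph.dist_comm
  have gcomm : ∀ a b : V, G.toSimple.dist a b = G.toSimple.dist b a :=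
    fun _ _ => SimpleGraph.dist_comm
  have adj1 : ∀ a b : V, G.Adjm a b → G.toSimple.dist a b = 1 := by
    rintro a b ⟨f, hf⟩
    have hne : a ≠ b := by
      intro h; exact G.loopless f (by rw [hf, h]; exact Sym2.mk_isDiag_iff.mpr rfl)
    have hadj : G.toSimple.Adj a b := ⟨hne, f, hf⟩
    have h1 := SimpleGraph.dist_le (SimpleGraph.Walk.cons hadj SimpleGraph.Walk.nil)
    simp only [SimpleGraph.Walk.length_cons, SimpleGraph.Walk.length_nil] at h1
    have h0 : G.toSimple.dist a b ≠ 0 := fun h => hne (hconn.dist_eq_zero_iff.mp h)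
    omega
  have huv1 : G.toSimple.dist u v = 1 := adj1 u v ⟨e, he⟩
  have hvu1 : G.toSimple.dist v u = 1 := by rw [gcomm]; exact huv1
  have huy : G.toSimple.dist u y = 2 := by rw [gcomm]; exact hyu
  have hvy : G.toSimple.dist v y = 3 := by rw [gcomm]; exact hyv
  have hstep : ∀ a b : V, G.Adjm a b → a ≠ u → a ≠ v → H.dist a b ≤ 1 := by
    rintro a b ⟨f, hf⟩ hau hav
    have hne : a ≠ b := by
      intro h; exact G.loopless f (by rw [hf, h]; exact Sym2.mk_isDiag_iff.mpr rfl)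
    have hfe : f ≠ e := by
      rintro rfl
      rw [he] at hf
      rcases Sym2.eq_iff.mp hf with ⟨h1, _⟩ | ⟨_, h2⟩
      · exact hau h1.symm
      · exact hav h2.symm
    have hadj : H.Adj a b := ⟨hne, ⟨f, hfe⟩, hf⟩
    have h1 := SimpleGraph.dist_le (SimpleGraph.Walk.cons hadj SimpleGraph.Walk.nil)
    simpa using h1
  have huv8 : 8 ≤ H.dist u v := by
    obtain ⟨p, hp, hlen⟩ := HC.exists_path_of_dist u v
    obtain ⟨q, hql, hqs, hqe, hqnd⟩ := Multigraph.exists_mwalk e p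
    have hcyc : (Multigraph.Walk.cons e (he.trans Sym2.eq_swap) q).IsCycle := by
      refine ⟨?_, ?_, ?_⟩
      · show (e :: q.edges).Nodup
        exact List.nodup_cons.mpr ⟨fun hmem => (hqe e hmem).1 rfl, hqnd hp.support_nodup⟩
      · show (v :: q.support).tail.Nodup
        rw [List.tail_cons, hqs]
        exact hp.support_nodup
      · show 0 < q.length + 1
        omega
    have hle : G.edgeGirth e ≤ q.length + 1 :=
      Nat.sInf_le ⟨v, Multigraph.Walk.cons e (he.trans Sym2.eq_swap) q, hcyc,
        List.mem_cons_self, rfl⟩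
    rw [hmax, h9] at hle
    omega
  have hxv2 : H.dist x v ≤ 2 := by
    obtain ⟨p, hp, hlen⟩ := hconn.exists_path_of_dist x v
    have hu : u ∉ p.support := by
      intro hu
      have h1 := Multigraph.dist_add_dist_le_length p hu
      omega
    have h2 : H.dist x v ≤ p.length := Multigraph.del_dist_le he (Or.inl rfl) p hu
    omega
  have hyu2 : H.dist y u ≤ 2 := by
    obtain ⟨p, hp, hlen⟩ := hconn.exists_path_of_dist y u
    have hv' : v ∉ p.support := by
      intro hv'
      have h1 := Multigraph.dist_add_dist_le_length p hv'
      omega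
    have h2 : H.dist y u ≤ p.length := Multigraph.del_dist_le he (Or.inr rfl) p hv'
    omega
  have hxy4 : G.toSimple.dist x y = 4 := by
    obtain ⟨p, hp, hlen⟩ := hconn.exists_path_of_dist x y
    have hd := hd4 x y
    have hu : u ∉ p.support := by
      intro hu
      have h1 := Multigraph.dist_add_dist_le_length p hu
      omega
    have h1 : H.dist x y ≤ p.length := Multigraph.del_dist_le he (Or.inl rfl) p hu
    have h2 := Htri u y v
    have h3 := Htri y x v
    have e1 := Hcomm u y
    have e2 := Hcomm y x
    omega
  refine ⟨hxy4, ?_⟩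
  intro w1 w2 w3 a1 a2 a3 a4
  have d1 : G.toSimple.dist x w1 = 1 := adj1 _ _ a1
  have d2 : G.toSimple.dist w1 w2 = 1 := adj1 _ _ a2
  have d3 : G.toSimple.dist w2 w3 = 1 := adj1 _ _ a3
  have d4 : G.toSimple.dist w3 y = 1 := adj1 _ _ a4
  have c1 : G.toSimple.dist w1 y = 3 := by
    have h1 := tri w1 w2 y; have h2 := tri w2 w3 y; have h3 := tri x w1 y
    omega
  have c2 : G.toSimple.dist w2 y = 2 := by
    have h1 := tri w2 w3 y; have h2 := tri x w2 y; have h3 := tri x w1 w2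
    omega
  have c3 : G.toSimple.dist x w2 = 2 := by
    have h1 := tri x w1 w2; have h2 := tri x w2 y
    omega
  have c4 : G.toSimple.dist x w3 = 3 := by
    have h1 := tri x w2 w3; have h2 := tri x w3 y
    omega
  have hx_u : x ≠ u := by intro h; rw [h, SimpleGraph.dist_self] at hxu; omega
  have hx_v : x ≠ v := by intro h; rw [h, SimpleGraph.dist_self] at hxv; omega
  have hw1_u : w1 ≠ u := by intro h; rw [h] at d1; omega
  have hw1_v : w1 ≠ v := by intro h; rw [h] at d1; omega
  have hw2_u : w2 ≠ u := by intro h; rw [h] at c3; omega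
  have hw2_v : w2 ≠ v := by intro h; rw [h] at c2; omega
  have hw3_u : w3 ≠ u := by intro h; rw [h] at d4; omega
  have hw3_v : w3 ≠ v := by intro h; rw [h] at d4; omega
  have s1 : H.dist x w1 ≤ 1 := hstep x w1 a1 hx_u hx_v
  have s2 : H.dist w1 w2 ≤ 1 := hstep w1 w2 a2 hw1_u hw1_v
  have s3 : H.dist w2 w3 ≤ 1 := hstep w2 w3 a3 hw2_u hw2_v
  have s4 : H.dist w3 y ≤ 1 := hstep w3 y a4 hw3_u hw3_v
  have hW1v : H.dist w1 v ≤ 3 := by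
    have h1 := Htri w1 x v; have e1 := Hcomm w1 x
    omega
  have hW1u_le : H.dist w1 u ≤ 5 := by
    have h1 := Htri w1 w2 u; have h2 := Htri w2 w3 u; have h3 := Htri w3 y u
    omega
  have hW1 : H.dist w1 u = 5 ∧ H.dist w1 v = 3 := by
    have h1 := Htri u w1 v; have e1 := Hcomm u w1
    constructor <;> omega
  have hW2v : H.dist w2 v ≤ 4 := by
    have h1 := Htri w2 w1 v; have h2 := Htri w1 x v
    have e1 := Hcomm w2 w1; have e2 := Hcomm w1 x
    omega
  have hW2u : H.dist w2 u ≤ 4 := by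
    have h1 := Htri w2 w3 u; have h2 := Htri w3 y u
    omega
  have hW2 : H.dist w2 u = 4 ∧ H.dist w2 v = 4 := by
    have h1 := Htri u w2 v; have e1 := Hcomm u w2
    constructor <;> omega
  have hW3u : H.dist w3 u ≤ 3 := by
    have h1 := Htri w3 y u
    omega
  have hW3v : H.dist w3 v ≤ 5 := by
    have h1 := Htri w3 w2 v; have h2 := Htri w2 w1 v; have h3 := Htri w1 x v
    have e1 := Hcomm w3 w2; have e2 := Hcomm w2 w1; have e3 := Hcomm w1 x
    omega
  have hW3 : H.dist w3 u = 3 ∧ H.dist w3 v = 5 := by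
    have h1 := Htri u w3 v; have e1 := Hcomm u w3
    constructor <;> omega
  have he' : G.ends e = s(v, u) := he.trans Sym2.eq_swap
  have t1u : min (H.dist w1 u) (H.dist w1 v + 1) ≤ G.toSimple.dist w1 u :=
    Multigraph.transfer hconn he unv w1
  have t1v : min (H.dist w1 v) (H.dist w1 u + 1) ≤ G.toSimple.dist w1 v :=
    Multigraph.transfer hconn he' unv.symm w1
  have t2u : min (H.dist w2 u) (H.dist w2 v + 1) ≤ G.toSimple.dist w2 u :=
    Multigraph.transfer hconn he unv w2
  have t2v : min (H.dist w2 v) (H.dist w2 u + 1) ≤ G.toSimple.dist w2 v :=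
    Multigraph.transfer hconn he' unv.symm w2
  have t3u : min (H.dist w3 u) (H.dist w3 v + 1) ≤ G.toSimple.dist w3 u :=
    Multigraph.transfer hconn he unv w3
  have t3v : min (H.dist w3 v) (H.dist w3 u + 1) ≤ G.toSimple.dist w3 v :=
    Multigraph.transfer hconn he' unv.symm w3
  have dle1 : G.toSimple.dist w1 v ≤ H.dist w1 v := Multigraph.dist_le_del HC w1 v
  have dle3 : G.toSimple.dist w3 u ≤ H.dist w3 u := Multigraph.dist_le_del HC w3 u
  have u1 := hd4 w1 u
  have u2a := hd4 w2 u
  have u2b := hd4 w2 v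
  have u3 := hd4 w3 v
  obtain ⟨q1, q2⟩ := hW1
  obtain ⟨q3, q4⟩ := hW2
  obtain ⟨q5, q6⟩ := hW3
  refine ⟨⟨?_, ?_⟩, ⟨?_, ?_⟩, ⟨?_, ?_⟩⟩
  · show G.toSimple.dist w1 u = 4; omega
  · show G.toSimple.dist w1 v = 3; omega
  · show G.toSimple.dist w2 u = 4; omega
  · show G.toSimple.dist w2 v = 4; omega
  · show G.toSimple.dist w3 u = 3; omega
  · show G.toSimple.dist w3 v = 4; omega
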